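/- The real constant C₀ = ∓60/(47√47) and σ = ±12/√47 together with C = ±(√47/30)·(-225α)^(1/3) yield: for any real constant C₁, the function y(z) = (C + C₁·exp(±z/√47))^(-3), on any interval where C + C₁ exp(±z/√47) > 0, satisfies y''' + σ y'' + y' - C₀ y + (α/2) y² = 0. -/

import Mathlib

lemma ks_key (k c α A C F : ℝ) (hk2 : k ^ 2 = 1 / 47) (hc : c ^ 3 = -225 * α)
    (hC : C = 47 * k * c / 30) (hF : F ≠ 0) (hFA : F = C + A) :
    ((-3) * k ^ 3 * A * F ^ (-4 : ℤ) + 36 * k ^ 3 * A ^ 2 * F ^ (-5 : ℤ)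
        - 60 * k ^ 3 * A ^ 3 * F ^ (-6 : ℤ))
      + 12 * k * ((-3) * k ^ 2 * A * F ^ (-4 : ℤ) + 12 * k ^ 2 * A ^ 2 * F ^ (-5 : ℤ))
      + (-3) * k * A * F ^ (-4 : ℤ) - (-60 * k / 47) * F ^ (-3 : ℤ)
      + α / 2 * (F ^ (-3 : ℤ)) ^ 2 = 0 := by
  have h6 : F ^ 6 ≠ 0 := pow_ne_zero _ hF
  apply mul_left_cancel₀ h6
  rw [mul_zero]
  calc F ^ 6 * (((-3) * k ^ 3 * A * F ^ (-4 : ℤ) + 36 * k ^ 3 * A ^ 2 * F ^ (-5 : ℤ)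
        - 60 * k ^ 3 * A ^ 3 * F ^ (-6 : ℤ))
      + 12 * k * ((-3) * k ^ 2 * A * F ^ (-4 : ℤ) + 12 * k ^ 2 * A ^ 2 * F ^ (-5 : ℤ))
      + (-3) * k * A * F ^ (-4 : ℤ) - (-60 * k / 47) * F ^ (-3 : ℤ)
      + α / 2 * (F ^ (-3 : ℤ)) ^ 2)
      = k ^ 3 * (-39 * A * F ^ 2 + 180 * A ^ 2 * F - 60 * A ^ 3) - 3 * k * A * F ^ 2
          + 60 * k / 47 * F ^ 3 + α / 2 := by
        simp only [zpow_neg, zpow_ofNat]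
        field_simp
        ring
    _ = 0 := by
        have hA : A = F - C := by linarith
        subst hA; subst hC
        linear_combination (k * (-39 * (F - 47 * k * c / 30) * F ^ 2
            + 180 * (F - 47 * k * c / 30) ^ 2 * F - 60 * (F - 47 * k * c / 30) ^ 3)
            + (2209 / 450) * c ^ 3 * (k ^ 2 + 1 / 47)) * hk2 + (1 / 450) * hc

theorem kuramoto_sivashinsky_kink (α s C₀ σ c C C₁ : ℝ) (hα : α ≠ 0)
    (hs : s = 1 ∨ s = -1)
    (hC₀ : C₀ = -s * 60 / (47 * Real.sqrt 47))
    (hσ : σ = s * 12 / Real.sqrt 47)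
    (hc : c ^ 3 = -225 * α)
    (hC : C = s * (Real.sqrt 47 / 30) * c)
    (y : ℝ → ℝ)
    (hy : ∀ z, y z = (C + C₁ * Real.exp (s * z / Real.sqrt 47)) ^ (-3 : ℤ)) :
    ∀ z, C + C₁ * Real.exp (s * z / Real.sqrt 47) > 0 →
      deriv^[3] y z + σ * deriv (deriv y) z + deriv y z - C₀ * y z
        + (α / 2) * (y z) ^ 2 = 0 := by
  have h47 : (0:ℝ) < 47 := by norm_num
  have hr0 : (0:ℝ) < Real.sqrt 47 := Real.sqrt_pos.mpr h47
  set r : ℝ := Real.sqrt 47 with hrdef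
  have hrne : r ≠ 0 := ne_of_gt hr0
  have hr2 : r ^ 2 = 47 := Real.sq_sqrt (le_of_lt h47)
  have hs2 : s ^ 2 = 1 := by rcases hs with h | h <;> rw [h] <;> norm_num
  set k : ℝ := s / r with hkdef
  have hk2 : k ^ 2 = 1 / 47 := by rw [hkdef, div_pow, hs2, hr2]
  set E : ℝ → ℝ := fun z => C₁ * Real.exp (s * z / r) with hEdef
  set f : ℝ → ℝ := fun z => C + E z with hfdef
  have hE' : ∀ z, HasDerivAt E (k * E z) z := by
    intro z
    have h1 : HasDerivAt (fun z : ℝ => s * z / r) k z := by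
      simpa [hkdef, mul_comm, mul_div_assoc] using
        ((hasDerivAt_id z).const_mul s).div_const r
    have h2 := (h1.exp).const_mul C₁
    refine h2.congr_deriv ?_
    simp [hEdef]; ring
  have hf' : ∀ z, HasDerivAt f (k * E z) z := fun z => (hE' z).const_add C
  set d1 : ℝ → ℝ := fun z => (-3) * k * E z * (f z) ^ (-4 : ℤ) with hd1def
  set d2 : ℝ → ℝ := fun z => (-3) * k ^ 2 * E z * (f z) ^ (-4 : ℤ)
      + 12 * k ^ 2 * (E z) ^ 2 * (f z) ^ (-5 : ℤ) with hd2def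
  set d3 : ℝ → ℝ := fun z => ((-3) * k ^ 3 * E z * (f z) ^ (-4 : ℤ)
      + 36 * k ^ 3 * (E z) ^ 2 * (f z) ^ (-5 : ℤ)
      - 60 * k ^ 3 * (E z) ^ 3 * (f z) ^ (-6 : ℤ)) with hd3def
  have hcont : Continuous f := by
    apply continuous_const.add
    apply continuous_const.mul
    exact Real.continuous_exp.comp (by continuity)
  have hU : IsOpen {z | f z ≠ 0} := isOpen_compl_singleton.preimage hcont
  -- zpow derivative helper
  have hzpow : ∀ (m : ℤ) z, f z ≠ 0 →
      HasDerivAt (fun w => (f w) ^ m) ((m : ℝ) * (f z) ^ (m - 1) * (k * E z)) z := by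
    intro m z hz
    exact (hasDerivAt_zpow m (f z) (Or.inl hz)).comp z (hf' z)
  have h1 : ∀ z, f z ≠ 0 → HasDerivAt y (d1 z) z := by
    intro z hz
    have := hzpow (-3) z hz
    have hyf : y = fun w => (f w) ^ (-3 : ℤ) := funext fun w => hy w
    rw [hyf]
    convert this using 1
    norm_num [hd1def]
    ring
  have hderiv1 : ∀ z, f z ≠ 0 → deriv y z = d1 z := fun z hz => (h1 z hz).deriv
  have hD1 : ∀ z, f z ≠ 0 → HasDerivAt d1 (d2 z) z := by
    intro z hz
    have h4 := hzpow (-4) z hz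
    have := ((hE' z).mul h4).const_mul ((-3) * k)
    have e : d1 = fun w => (-3) * k * (E w * (f w) ^ (-4 : ℤ)) := by
      funext w; rw [hd1def]; ring
    rw [e]
    refine this.congr_deriv ?_
    norm_num [hd2def]
    ring
  have h2 : ∀ z, f z ≠ 0 → HasDerivAt (deriv y) (d2 z) z := by
    intro z hz
    refine (hD1 z hz).congr_of_eventuallyEq ?_
    filter_upwards [hU.mem_nhds hz] with w hw
    exact hderiv1 w hw
  have hD2 : ∀ z, f z ≠ 0 → HasDerivAt d2 (d3 z) z := by
    intro z hz
    have h4 := hzpow (-4) z hz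
    have h5 := hzpow (-5) z hz
    have hE2 : HasDerivAt (fun w => (E w) ^ 2) (2 * E z ^ 1 * (k * E z)) z := (hE' z).pow 2
    have t1 := ((hE' z).mul h4).const_mul ((-3) * k ^ 2)
    have t2 := (hE2.mul h5).const_mul (12 * k ^ 2)
    have := t1.add t2
    have e : d2 = fun w => (-3) * k ^ 2 * (E w * (f w) ^ (-4 : ℤ))
        + 12 * k ^ 2 * ((E w) ^ 2 * (f w) ^ (-5 : ℤ)) := by
      funext w; rw [hd2def]; ring
    rw [e]
    refine this.congr_deriv ?_
    norm_num [hd3def]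
    ring
  intro z₀ hz₀
  have hfz : f z₀ ≠ 0 := by
    have : (0:ℝ) < f z₀ := by simpa [hfdef, hEdef] using hz₀
    exact ne_of_gt this
  have e1 : deriv y z₀ = d1 z₀ := hderiv1 z₀ hfz
  have e2 : deriv (deriv y) z₀ = d2 z₀ := (h2 z₀ hfz).deriv
  have h3 : HasDerivAt (deriv (deriv y)) (d3 z₀) z₀ := by
    refine (hD2 z₀ hfz).congr_of_eventuallyEq ?_
    filter_upwards [hU.mem_nhds hfz] with w hw
    exact (h2 w hw).deriv
  have e3 : deriv^[3] y z₀ = d3 z₀ := by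
    show deriv (deriv (deriv y)) z₀ = d3 z₀
    exact h3.deriv
  have hσ' : σ = 12 * k := by rw [hσ, hkdef]; ring
  have hC₀' : C₀ = -60 * k / 47 := by
    rw [hC₀, hkdef]
    field_simp
  have hC' : C = 47 * k * c / 30 := by
    rw [hC, hkdef]
    field_simp
    linear_combination (s * c) * hr2
  rw [e3, e2, e1, hy z₀, hσ', hC₀']
  have key := ks_key k c α (E z₀) C (f z₀) hk2 hc hC' hfz rfl
  simp only [hd1def, hd2def, hd3def, hfdef, hEdef] at key ⊢
  linear_combination key
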